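/- For the wreath product permutation built from η ∈ S_n and γ_1,...,γ_n ∈ S_k, L(σ) ≥ max over increasing subsequences i_1 < ... < i_m of η of Σ_{t=1}^m L(γ_{i_t}). In particular, L(σ) ≥ L(η) · min_i L(γ_i). -/

import Mathlib

open Finset

/-- Length of the longest increasing subsequence of a permutation of `Fin m`:
the largest cardinality of a set of positions on which the permutation is strictly
increasing. -/
noncomputable def lisLen {m : ℕ} (σ : Equiv.Perm (Fin m)) : ℕ :=
  sSup {c | ∃ s : Finset (Fin m), StrictMonoOn σ ↑s ∧ s.card = c}

/-- The wreath product permutation of `{0,...,nk-1}` built from `η ∈ S_n` and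
`γ_1,...,γ_n ∈ S_k`: position `(i,j)` (i.e. `i*k + j`) is sent to `(η i, γ i j)`. -/
def wreathPerm {n k : ℕ} (η : Equiv.Perm (Fin n)) (γ : Fin n → Equiv.Perm (Fin k)) :
    Equiv.Perm (Fin (n * k)) :=
  finProdFinEquiv.symm.trans ((Equiv.prodCongrRight γ).trans
    ((η.prodCongr (Equiv.refl (Fin k))).trans finProdFinEquiv))

/-- The block (of size `k`) containing a position. -/
def blockOf {n k : ℕ} (p : Fin (n * k)) : Fin n := (finProdFinEquiv.symm p).1

/-- The position within its block. -/
def posIn {n k : ℕ} (p : Fin (n * k)) : Fin k := (finProdFinEquiv.symm p).2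

lemma lisLen_bddAbove {m : ℕ} (σ : Equiv.Perm (Fin m)) :
    BddAbove {c | ∃ s : Finset (Fin m), StrictMonoOn σ ↑s ∧ s.card = c} :=
  ⟨m, by rintro c ⟨s, _, rfl⟩; simpa using s.card_le_univ⟩

lemma card_le_lisLen {m : ℕ} (σ : Equiv.Perm (Fin m)) (s : Finset (Fin m))
    (h : StrictMonoOn σ ↑s) : s.card ≤ lisLen σ :=
  le_csSup (lisLen_bddAbove σ) ⟨s, h, rfl⟩

lemma lisLen_witness {m : ℕ} (σ : Equiv.Perm (Fin m)) :
    ∃ s : Finset (Fin m), StrictMonoOn σ ↑s ∧ s.card = lisLen σ :=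
  Nat.sSup_mem (s := {c | ∃ s : Finset (Fin m), StrictMonoOn σ ↑s ∧ s.card = c})
    ⟨0, ∅, by simp [StrictMonoOn], rfl⟩ (lisLen_bddAbove σ)

lemma key_lt (k a b c d : ℕ) (hc : c < k) (hd : d < k) :
    c + k * a < d + k * b ↔ a < b ∨ (a = b ∧ c < d) := by
  constructor
  · intro h
    rcases lt_trichotomy a b with h' | h' | h'
    · exact Or.inl h'
    · exact Or.inr ⟨h', by subst h'; omega⟩
    · exfalso
      have h1 : k * (b + 1) ≤ k * a := Nat.mul_le_mul_left k h'
      have h2 : k * (b + 1) = k * b + k := by ring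
      omega
  · rintro (h | ⟨rfl, h⟩)
    · have h1 : k * (a + 1) ≤ k * b := Nat.mul_le_mul_left k h
      have h2 : k * (a + 1) = k * a + k := by ring
      omega
    · omega

lemma wreathPerm_apply {n k : ℕ} (η : Equiv.Perm (Fin n)) (γ : Fin n → Equiv.Perm (Fin k))
    (i : Fin n) (j : Fin k) :
    wreathPerm η γ (finProdFinEquiv (i, j)) = finProdFinEquiv (η i, γ i j) := by
  simp [wreathPerm]

/-- `L(σ)` is at least the sum of within-block LIS lengths over any increasing
subsequence of blocks under `η`; in particular `L(σ) ≥ L(η) · min_i L(γ_i)`. -/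
theorem stmt3 {n k : ℕ} (η : Equiv.Perm (Fin n)) (γ : Fin n → Equiv.Perm (Fin k)) :
    (∀ s : Finset (Fin n), StrictMonoOn η ↑s →
      ∑ i ∈ s, lisLen (γ i) ≤ lisLen (wreathPerm η γ)) ∧
    lisLen η * sInf (Set.range fun i => lisLen (γ i)) ≤ lisLen (wreathPerm η γ) := by
  choose t ht hcard using fun i => lisLen_witness (γ i)
  have main : ∀ s : Finset (Fin n), StrictMonoOn η ↑s →
      ∑ i ∈ s, lisLen (γ i) ≤ lisLen (wreathPerm η γ) := by
    intro s hs
    set T : Finset (Fin (n * k)) :=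
      s.biUnion (fun i => (t i).image (fun j => finProdFinEquiv (i, j))) with hT
    have hinj : ∀ i : Fin n, Function.Injective (fun j : Fin k => finProdFinEquiv (i, j)) := by
      intro i j j' h
      have := finProdFinEquiv.injective h
      exact (Prod.mk.injEq _ _ _ _).mp this |>.2
    have hTcard : T.card = ∑ i ∈ s, lisLen (γ i) := by
      rw [hT, Finset.card_biUnion]
      · refine Finset.sum_congr rfl fun i _ => ?_
        rw [Finset.card_image_of_injective _ (hinj i), hcard]
      · intro a _ b _ hab
        simp only [Finset.disjoint_left, Finset.mem_image]
        rintro p ⟨j, _, rfl⟩ ⟨j', _, h⟩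
        have := finProdFinEquiv.injective h
        exact hab ((Prod.mk.injEq _ _ _ _).mp this |>.1.symm)
    have hmono : StrictMonoOn (wreathPerm η γ) ↑T := by
      intro p hp q hq hpq
      simp only [hT, Finset.coe_biUnion, Set.mem_iUnion, Finset.mem_coe,
        Finset.mem_image] at hp hq
      obtain ⟨i, hi, j, hj, rfl⟩ := hp
      obtain ⟨i', hi', j', hj', rfl⟩ := hq
      rw [wreathPerm_apply, wreathPerm_apply]
      have hlt : (j : ℕ) + k * i < (j' : ℕ) + k * i' := by
        have := Fin.lt_iff_val_lt_val.mp hpq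
        simpa [finProdFinEquiv] using this
      rw [Fin.lt_iff_val_lt_val]
      have : ((γ i j : ℕ) + k * (η i : ℕ)) < ((γ i' j' : ℕ) + k * (η i' : ℕ)) := by
        rcases (key_lt k i i' j j' j.2 j'.2).mp hlt with h | ⟨hii, hjj⟩
        · refine (key_lt k _ _ _ _ (γ i j).2 (γ i' j').2).mpr (Or.inl ?_)
          exact hs hi hi' h
        · have hii' : i = i' := Fin.ext hii
          subst hii'
          refine (key_lt k _ _ _ _ (γ i j).2 (γ i j').2).mpr (Or.inr ⟨rfl, ?_⟩)
          exact ht i hj hj' (Fin.lt_iff_val_lt_val.mpr hjj)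
      simpa [finProdFinEquiv] using this
    calc ∑ i ∈ s, lisLen (γ i) = T.card := hTcard.symm
      _ ≤ lisLen (wreathPerm η γ) := card_le_lisLen _ T hmono
  refine ⟨main, ?_⟩
  obtain ⟨s, hs, hsc⟩ := lisLen_witness η
  calc lisLen η * sInf (Set.range fun i => lisLen (γ i))
      = ∑ _i ∈ s, sInf (Set.range fun i => lisLen (γ i)) := by
        rw [Finset.sum_const, hsc, smul_eq_mul]
    _ ≤ ∑ i ∈ s, lisLen (γ i) := by
        refine Finset.sum_le_sum fun i _ => ?_
        exact Nat.sInf_le ⟨i, rfl⟩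
    _ ≤ lisLen (wreathPerm η γ) := main s hs
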